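/- Let N and d be positive natural numbers, for each i ∈ {1,...,d} let g_i : X → {0,...,N} be a function, let ε > 0, let D_op and D_test be nonempty finite multisets over X, and let D_can ⊆ D_test. Call a sub-multiset S ⊆ D_can with |S| < |D_test| feasible if D_op and D_test − S are ε-portion similar. Then a feasible sub-multiset S* is a solution of the distribution-reshaping problem (i.e., S* has minimum cardinality among all feasible sub-multisets of D_can) if and only if S* satisfies, for all i ∈ {1,...,d} and j ∈ {0,...,N}, the linear constraints −ε·(|D_test| − |S*|) ≤ (ct(j, g_i(D_op))/|D_op|)·(|D_test| − |S*|) − (ct(j, g_i(D_test)) − ct(j, g_i(S*))) ≤ ε·(|D_test| − |S*|), and |S*| ≤ |S| for every S ⊆ D_can with |S| < |D_test| satisfying these linear constraints. In particular, the minimum cardinality over feasible sub-multisets equals the optimal value of the linearized (MILP) problem. -/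
import Mathlib


/-- A feasible sub-multiset `S*` (i.e. `S* ⊆ D_can`, `|S*| < |D_test|`, and
`D_op`, `D_test − S*` are ε-portion similar) is a minimum-cardinality solution of the
distribution-reshaping problem if and only if it satisfies the linearized (MILP)
constraints and has cardinality at most that of every `S ⊆ D_can` with `|S| < |D_test|`
satisfying the linearized constraints. In particular, the minimum cardinality over
feasible sub-multisets equals the optimal value of the linearized (MILP) problem. -/
theorem reshaping_optimum_iff_milp_optimum (X : Type*) [DecidableEq X]
    (N d : ℕ) (hN : 0 < N) (hd : 0 < d)
    (g : Fin d → X → ℕ) (hg : ∀ i x, g i x ≤ N)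
    (ε : ℝ) (hε : 0 < ε)
    (Dop Dtest : Multiset X) (hop : Dop ≠ 0) (htest : Dtest ≠ 0)
    (Dcan : Multiset X) (hcan : Dcan ≤ Dtest)
    -- the ε-portion-similarity constraint for `D_op` and `D_test − S`:
    (Similar : Multiset X → Prop)
    (hSimilar : ∀ S : Multiset X, Similar S ↔
      (∀ i : Fin d, ∀ j : ℕ, j ≤ N →
        -ε ≤ ((Dop.map (g i)).count j : ℝ) / (Dop.card : ℝ)
              - (((Dtest - S).map (g i)).count j : ℝ) / ((Dtest.card : ℝ) - (S.card : ℝ)) ∧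
        ((Dop.map (g i)).count j : ℝ) / (Dop.card : ℝ)
              - (((Dtest - S).map (g i)).count j : ℝ) / ((Dtest.card : ℝ) - (S.card : ℝ)) ≤ ε))
    -- the linearized (MILP) constraints:
    (Lin : Multiset X → Prop)
    (hLin : ∀ S : Multiset X, Lin S ↔
      (∀ i : Fin d, ∀ j : ℕ, j ≤ N →
        -ε * ((Dtest.card : ℝ) - (S.card : ℝ)) ≤
            ((Dop.map (g i)).count j : ℝ) / (Dop.card : ℝ) * ((Dtest.card : ℝ) - (S.card : ℝ))
              - (((Dtest.map (g i)).count j : ℝ) - ((S.map (g i)).count j : ℝ)) ∧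
        ((Dop.map (g i)).count j : ℝ) / (Dop.card : ℝ) * ((Dtest.card : ℝ) - (S.card : ℝ))
              - (((Dtest.map (g i)).count j : ℝ) - ((S.map (g i)).count j : ℝ)) ≤
            ε * ((Dtest.card : ℝ) - (S.card : ℝ))))
    (Sstar : Multiset X) (hSstar : Sstar ≤ Dcan) (hSstarCard : Sstar.card < Dtest.card)
    (hSstarFeas : Similar Sstar) :
    ((∀ S : Multiset X, S ≤ Dcan → S.card < Dtest.card → Similar S →
        Sstar.card ≤ S.card)
      ↔
     (Lin Sstar ∧
      ∀ S : Multiset X, S ≤ Dcan → S.card < Dtest.card → Lin S →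
        Sstar.card ≤ S.card))
    ∧
    sInf {n : ℕ | ∃ S : Multiset X, S ≤ Dcan ∧ S.card < Dtest.card ∧ Similar S ∧ S.card = n}
      = sInf {n : ℕ | ∃ S : Multiset X, S ≤ Dcan ∧ S.card < Dtest.card ∧ Lin S ∧ S.card = n} := by
  have key : ∀ S : Multiset X, S ≤ Dtest → S.card < Dtest.card → (Similar S ↔ Lin S) := by
    intro S hS hc
    have hD : (0:ℝ) < (Dtest.card : ℝ) - (S.card : ℝ) := by
      have : (S.card : ℝ) < (Dtest.card : ℝ) := by exact_mod_cast hc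
      linarith
    rw [hSimilar, hLin]
    refine forall_congr' fun i => forall_congr' fun j => imp_congr_right fun hj => ?_
    have hmap : Dtest.map (g i) = (Dtest - S).map (g i) + S.map (g i) := by
      rw [← Multiset.map_add, tsub_add_cancel_of_le hS]
    have hcnt : ((((Dtest - S)).map (g i)).count j : ℝ)
        = ((Dtest.map (g i)).count j : ℝ) - ((S.map (g i)).count j : ℝ) := by
      have : (Dtest.map (g i)).count j = ((Dtest - S).map (g i)).count j + (S.map (g i)).count j := by
        rw [hmap, Multiset.count_add]
      rw [this]; push_cast; ring
    rw [hcnt]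
    set a := ((Dop.map (g i)).count j : ℝ) / (Dop.card : ℝ) with ha
    set t := ((Dtest.map (g i)).count j : ℝ)
    set s := ((S.map (g i)).count j : ℝ)
    set D := (Dtest.card : ℝ) - (S.card : ℝ)
    have hrw : a - (t - s) / D = (a * D - (t - s)) / D := by
      field_simp
    rw [hrw, le_div_iff₀ hD, div_le_iff₀ hD]
  constructor
  · constructor
    · intro h
      refine ⟨(key Sstar (hSstar.trans hcan) hSstarCard).mp hSstarFeas, ?_⟩
      intro S h1 h2 h3
      exact h S h1 h2 ((key S (h1.trans hcan) h2).mpr h3)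
    · rintro ⟨_, h⟩ S h1 h2 h3
      exact h S h1 h2 ((key S (h1.trans hcan) h2).mp h3)
  · congr 1
    ext n
    simp only [Set.mem_setOf_eq]
    constructor
    · rintro ⟨S, h1, h2, h3, h4⟩
      exact ⟨S, h1, h2, (key S (h1.trans hcan) h2).mp h3, h4⟩
    · rintro ⟨S, h1, h2, h3, h4⟩
      exact ⟨S, h1, h2, (key S (h1.trans hcan) h2).mpr h3, h4⟩
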